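/- An explicit improper integral identity: Fix an integer Δ ≥ 3. For every r ∈ R_Δ, the improper integral ∫_0^∞ e^{−λ(s)} · λ(s) · λ'(s) · Λ_r(s) ds converges and equals (1/2) · Σ_{k=3}^Δ (k−2)·r_k. -/

import Mathlib

open Real MeasureTheory Filter

noncomputable section

/-- Tail sums: `s_k = Σ_{d=k}^Δ r_d` (also used as `q_k` for distributions `p`). -/
def tailS (Δ : ℕ) (r : ℕ → ℝ) (k : ℕ) : ℝ := ∑ d ∈ Finset.Icc k Δ, r d

/-- Membership in the set `R_Δ`: `r_2 = -1`, `r_k ≥ 0` for `3 ≤ k ≤ Δ`, `r_k = 0` for `k > Δ`,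
and `Σ_{k=3}^Δ r_k = 1`. -/
def memR (Δ : ℕ) (r : ℕ → ℝ) : Prop :=
  r 2 = -1 ∧ (∀ k, 3 ≤ k → k ≤ Δ → 0 ≤ r k) ∧ (∀ k, Δ < k → r k = 0) ∧
    (∑ k ∈ Finset.Icc 3 Δ, r k) = 1

/-- The Molloy–Reed constant `Υ_r = Σ_{k=3}^Δ k(k-2) r_k`. -/
def Upsilon (Δ : ℕ) (r : ℕ → ℝ) : ℝ := ∑ k ∈ Finset.Icc 3 Δ, (k : ℝ) * ((k : ℝ) - 2) * r k

/-- `Λ_r(t) = λ'(t) · ∫_0^{λ(t)} e^x/(1+x)² · (Σ_{k=2}^{Δ-1} x^k/k! · s_{k+1}) dx`. -/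
def LamErr (lam : ℝ → ℝ) (Δ : ℕ) (r : ℕ → ℝ) (t : ℝ) : ℝ :=
  deriv lam t * ∫ x in (0:ℝ)..(lam t),
    Real.exp x / (1 + x) ^ 2 *
      ∑ k ∈ Finset.Icc 2 (Δ - 1), x ^ k / (Nat.factorial k : ℝ) * tailS Δ r (k + 1)

/-- `H_r(t) = e^{-λ(t)} (Λ_r'(t) - λ'(t)Λ_r(t) + λ'(t) Σ_{k=0}^{Δ-2} λ(t)^k/k! · r_{k+2})`. -/
def Herr (lam : ℝ → ℝ) (Δ : ℕ) (r : ℕ → ℝ) (t : ℝ) : ℝ :=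
  Real.exp (-lam t) *
    (deriv (LamErr lam Δ r) t - deriv lam t * LamErr lam Δ r t +
      deriv lam t * ∑ k ∈ Finset.range (Δ - 1), lam t ^ k / (Nat.factorial k : ℝ) * r (k + 2))

/-- `I_r(t) = e^{-λ(t)} ( -Λ_r(t) + Σ_{k=1}^{Δ-2} λ(t)^k/k! · s_{k+2})`. -/
def Ierr (lam : ℝ → ℝ) (Δ : ℕ) (r : ℕ → ℝ) (t : ℝ) : ℝ :=
  Real.exp (-lam t) *
    (-LamErr lam Δ r t +
      ∑ k ∈ Finset.Icc 1 (Δ - 2), lam t ^ k / (Nat.factorial k : ℝ) * tailS Δ r (k + 2))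

/-- `u(t) = 1 + λ(t) ∫_0^t (λ'(s)-1)/λ(s)² ds`. -/
def uAux (lam : ℝ → ℝ) (t : ℝ) : ℝ :=
  1 + lam t * ∫ s in (0:ℝ)..t, (deriv lam s - 1) / (lam s) ^ 2

/-- `α_r(t) = -∫_0^t u(s) H_r(s) λ(s) ds`. -/
def alphaAux (lam : ℝ → ℝ) (Δ : ℕ) (r : ℕ → ℝ) (t : ℝ) : ℝ :=
  -∫ s in (0:ℝ)..t, uAux lam s * Herr lam Δ r s * lam s

/-- `β_r(t) = ∫_0^t H_r(s) λ(s)² ds`. -/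
def betaAux (lam : ℝ → ℝ) (Δ : ℕ) (r : ℕ → ℝ) (t : ℝ) : ℝ :=
  ∫ s in (0:ℝ)..t, Herr lam Δ r s * (lam s) ^ 2

/-- `ω_r(t) = α_r(t) λ(t) + β_r(t) u(t)`. -/
def omegaAux (lam : ℝ → ℝ) (Δ : ℕ) (r : ℕ → ℝ) (t : ℝ) : ℝ :=
  alphaAux lam Δ r t * lam t + betaAux lam Δ r t * uAux lam t

/-- `t^-_{p,δ} = (1-δ)/(ε Υ_r)`. -/
def tMinus (Δ : ℕ) (r : ℕ → ℝ) (ε δ : ℝ) : ℝ := (1 - δ) / (ε * Upsilon Δ r)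

/-- `t^+_{p,δ} = (1+δ)/(ε Υ_r)`. -/
def tPlus (Δ : ℕ) (r : ℕ → ℝ) (ε δ : ℝ) : ℝ := (1 + δ) / (ε * Upsilon Δ r)

/-- `w^-_{p,δ}`. -/
def wMinus (lam : ℝ → ℝ) (Δ : ℕ) (r : ℕ → ℝ) (ε δ : ℝ) (t : ℝ) : ℝ :=
  if t ≤ tMinus Δ r ε δ then lam t + (1 + δ / 2) * ε * omegaAux lam Δ r t
  else lam (tMinus Δ r ε δ) + (1 + δ / 2) * ε * omegaAux lam Δ r (tMinus Δ r ε δ)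

/-- `w^+_{p,δ}`. -/
def wPlus (lam : ℝ → ℝ) (Δ : ℕ) (r : ℕ → ℝ) (ε δ : ℝ) (t : ℝ) : ℝ :=
  if t ≤ tPlus Δ r ε δ then lam t + (1 - δ / 2) * ε * omegaAux lam Δ r t
  else lam (tPlus Δ r ε δ) + (1 - δ / 2) * ε * omegaAux lam Δ r (tPlus Δ r ε δ)

/-- `Ī^-_{p,δ}(t) = e^{-λ(t)} + (1-δ) ε I_r(t)`. -/
def IbarMinus (lam : ℝ → ℝ) (Δ : ℕ) (r : ℕ → ℝ) (ε δ : ℝ) (t : ℝ) : ℝ :=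
  Real.exp (-lam t) + (1 - δ) * ε * Ierr lam Δ r t

/-- `Ī^+_{p,δ}(t) = e^{-λ(t)} + (1+δ) ε I_r(t)`. -/
def IbarPlus (lam : ℝ → ℝ) (Δ : ℕ) (r : ℕ → ℝ) (ε δ : ℝ) (t : ℝ) : ℝ :=
  Real.exp (-lam t) + (1 + δ) * ε * Ierr lam Δ r t

/-- `Ĩ_p(x) = e^{-x} (1 + ε Σ_{k=1}^{Δ-2} x^k/k! · s_{k+2})`. -/
def Itilde (Δ : ℕ) (r : ℕ → ℝ) (ε : ℝ) (x : ℝ) : ℝ :=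
  Real.exp (-x) *
    (1 + ε * ∑ k ∈ Finset.Icc 1 (Δ - 2), x ^ k / (Nat.factorial k : ℝ) * tailS Δ r (k + 2))


namespace ImproperAux
open Set Topology

section
variable (lam : ℝ → ℝ)

theorem lam_nonneg (hdiff : Differentiable ℝ lam) (h0 : lam 0 = 0)
    (hode : ∀ t : ℝ, 0 ≤ t → deriv lam t = Real.exp (-lam t) * (1 + lam t)) :
    ∀ t : ℝ, 0 ≤ t → 0 ≤ lam t := by
  intro t ht
  by_contra hneg
  push_neg at hneg
  by_cases hS : ∃ s ∈ Icc (0:ℝ) t, lam s ≤ -1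
  · obtain ⟨s₀, hs₀, hls₀⟩ := hS
    set S : Set ℝ := {s | s ∈ Icc (0:ℝ) t ∧ lam s ≤ -1} with hSdef
    have hSclosed : IsClosed S :=
      isClosed_Icc.inter (isClosed_le (hdiff.continuous) continuous_const)
    have hSne : S.Nonempty := ⟨s₀, hs₀, hls₀⟩
    have hSbdd : BddBelow S := ⟨0, fun x hx => hx.1.1⟩
    obtain ⟨⟨hc0le, hct⟩, hlc⟩ := hSclosed.csInf_mem hSne hSbdd
    set c := sInf S with hc
    have hc0 : 0 < c := by
      rcases lt_or_eq_of_le hc0le with h | h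
      · exact h
      · rw [← h, h0] at hlc; linarith
    have hmono : MonotoneOn lam (Icc 0 c) := by
      apply monotoneOn_of_deriv_nonneg (convex_Icc 0 c) hdiff.continuous.continuousOn
        (fun x _ => (hdiff x).differentiableWithinAt)
      intro x hx
      rw [interior_Icc] at hx
      have hxnotS : x ∉ S := fun hxS => absurd (csInf_le hSbdd hxS) (not_le.mpr hx.2)
      have hxgt : -1 < lam x := by
        by_contra hle; push_neg at hle
        exact hxnotS ⟨⟨le_of_lt hx.1, le_trans (le_of_lt hx.2) hct⟩, hle⟩
      rw [hode x (le_of_lt hx.1)]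
      have h1 : (0:ℝ) < 1 + lam x := by linarith
      positivity
    have := hmono ⟨le_refl 0, le_of_lt hc0⟩ ⟨le_of_lt hc0, le_refl c⟩ (le_of_lt hc0)
    rw [h0] at this
    linarith
  · push_neg at hS
    have hmono : MonotoneOn lam (Icc 0 t) := by
      apply monotoneOn_of_deriv_nonneg (convex_Icc 0 t) hdiff.continuous.continuousOn
        (fun x _ => (hdiff x).differentiableWithinAt)
      intro x hx
      rw [interior_Icc] at hx
      have := hS x ⟨le_of_lt hx.1, le_of_lt hx.2⟩
      rw [hode x (le_of_lt hx.1)]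
      nlinarith [Real.exp_pos (-lam x)]
    have := hmono ⟨le_refl 0, ht⟩ ⟨ht, le_refl t⟩ ht
    rw [h0] at this; linarith

theorem lam_mono (hdiff : Differentiable ℝ lam) (h0 : lam 0 = 0)
    (hode : ∀ t : ℝ, 0 ≤ t → deriv lam t = Real.exp (-lam t) * (1 + lam t)) :
    MonotoneOn lam (Ici 0) := by
  apply monotoneOn_of_deriv_nonneg (convex_Ici 0) hdiff.continuous.continuousOn
    (fun x _ => (hdiff x).differentiableWithinAt)
  intro x hx
  rw [interior_Ici] at hx
  have h1 := lam_nonneg lam hdiff h0 hode x (le_of_lt hx)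
  rw [hode x (le_of_lt hx)]
  positivity

theorem lam_tendsto (hdiff : Differentiable ℝ lam) (h0 : lam 0 = 0)
    (hode : ∀ t : ℝ, 0 ≤ t → deriv lam t = Real.exp (-lam t) * (1 + lam t)) :
    Tendsto lam atTop atTop := by
  have hnn := lam_nonneg lam hdiff h0 hode
  have hmono := lam_mono lam hdiff h0 hode
  rw [tendsto_atTop]
  intro M
  rw [eventually_atTop]
  set M' := max M 0 with hM'
  set T := (M' + 1) * Real.exp M' with hT
  have hM'0 : 0 ≤ M' := le_max_right _ _
  have hT0 : 0 < T := by positivity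
  have key : M' ≤ lam T := by
    by_contra hlt; push_neg at hlt
    have hbd : ∀ s ∈ Icc (0:ℝ) T, lam s ≤ M' :=
      fun s hs => le_of_lt (lt_of_le_of_lt (hmono hs.1 (le_of_lt hT0) hs.2) hlt)
    have hmono2 : MonotoneOn (fun s => lam s - Real.exp (-M') * s) (Icc 0 T) := by
      apply monotoneOn_of_deriv_nonneg (convex_Icc 0 T)
        ((hdiff.fun_sub ((differentiable_const _).fun_mul differentiable_fun_id)).continuous.continuousOn)
        (fun x _ => ((hdiff x).fun_sub (((differentiable_const _).fun_mul differentiable_fun_id) x)).differentiableWithinAt)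
      intro x hx
      rw [interior_Icc] at hx
      have hD : HasDerivAt (fun y => lam y - Real.exp (-M') * y) (deriv lam x - Real.exp (-M') * 1) x :=
        (hdiff x).hasDerivAt.sub ((hasDerivAt_id x).const_mul (Real.exp (-M')))
      rw [hD.deriv, mul_one]
      rw [hode x (le_of_lt hx.1)]
      have h1 : Real.exp (-M') ≤ Real.exp (-lam x) :=
        Real.exp_le_exp.mpr (by linarith [hbd x ⟨le_of_lt hx.1, le_of_lt hx.2⟩])
      have h2 : 1 ≤ 1 + lam x := by linarith [hnn x (le_of_lt hx.1)]
      nlinarith [Real.exp_pos (-lam x)]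
    have h2 := hmono2 ⟨le_refl 0, hT0.le⟩ ⟨hT0.le, le_refl T⟩ hT0.le
    simp only [h0, mul_zero, sub_zero] at h2
    have hTeval : Real.exp (-M') * T = M' + 1 := by
      rw [hT, Real.exp_neg]
      field_simp
    rw [hTeval] at h2
    linarith
  exact ⟨T, fun t ht => le_trans (le_max_left M 0)
    (le_trans key (hmono hT0.le (le_trans hT0.le ht) ht))⟩
end

section
variable (Δ : ℕ) (r : ℕ → ℝ)

/-- integrand of the inner integral -/
def hFun (x : ℝ) : ℝ :=
  Real.exp x / (1 + x) ^ 2 *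
    ∑ k ∈ Finset.Icc 2 (Δ - 1), x ^ k / (Nat.factorial k : ℝ) * tailS Δ r (k + 1)

/-- the polynomial part -/
def gPoly (x : ℝ) : ℝ :=
  ∑ k ∈ Finset.Icc 2 (Δ - 1), x ^ k / (Nat.factorial k : ℝ) * tailS Δ r (k + 1)

def Ffun (y : ℝ) : ℝ := ∫ x in (0:ℝ)..y, hFun Δ r x

def Gfun (y : ℝ) : ℝ :=
  -(1/2) * Real.exp (-2*y) * (1+y)^2 * Ffun Δ r y
  + (1/2) * ∑ k ∈ Finset.Icc 2 (Δ-1), tailS Δ r (k+1) *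
      (1 - Real.exp (-y) * ∑ j ∈ Finset.range (k+1), y^j / (Nat.factorial j : ℝ))

theorem gPoly_cont : Continuous (gPoly Δ r) := by
  unfold gPoly; fun_prop

theorem hFun_contAt {x : ℝ} (hx : (0:ℝ) ≤ x) : ContinuousAt (hFun Δ r) x := by
  have hne : (1 + x) ^ 2 ≠ 0 := by positivity
  unfold hFun
  exact ((Real.continuous_exp.continuousAt).div
    (((continuous_const.add continuous_id).pow 2).continuousAt) hne).mul
    ((gPoly_cont Δ r).continuousAt)

theorem hFun_intble {y : ℝ} (hy : 0 ≤ y) :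
    IntervalIntegrable (hFun Δ r) volume 0 y := by
  apply ContinuousOn.intervalIntegrable
  intro x hx
  rw [uIcc_of_le hy] at hx
  exact (hFun_contAt Δ r hx.1).continuousWithinAt

theorem Ffun_hasDeriv {y : ℝ} (hy : 0 ≤ y) :
    HasDerivAt (Ffun Δ r) (hFun Δ r y) y := by
  apply intervalIntegral.integral_hasDerivAt_right (hFun_intble Δ r hy)
  · exact ⟨univ, univ_mem, by
      apply Measurable.aestronglyMeasurable
      unfold hFun
      apply Measurable.mul
      · exact Real.measurable_exp.div ((measurable_id.const_add 1).pow_const 2)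
      · exact Finset.measurable_sum _ (fun k _ =>
          ((measurable_id.pow_const k).div_const _).mul_const _)⟩
  · exact hFun_contAt Δ r hy

theorem sumExp_hasDeriv (k : ℕ) (y : ℝ) :
    HasDerivAt (fun y => 1 - Real.exp (-y) * ∑ j ∈ Finset.range (k+1), y^j / (Nat.factorial j : ℝ))
      (Real.exp (-y) * y^k / (Nat.factorial k : ℝ)) y := by
  have hA : HasDerivAt (fun y : ℝ => ∑ j ∈ Finset.range (k+1), y^j / (Nat.factorial j : ℝ))
      (∑ j ∈ Finset.range k, y^j / (Nat.factorial j : ℝ)) y := by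
    have h1 : HasDerivAt (fun y : ℝ => ∑ j ∈ Finset.range (k+1), y^j / (Nat.factorial j : ℝ))
        (∑ j ∈ Finset.range (k+1), (j : ℝ) * y^(j-1) / (Nat.factorial j : ℝ)) y := by
      apply HasDerivAt.fun_sum
      intro j _
      simpa [div_eq_mul_inv, mul_comm, mul_assoc, mul_left_comm] using
        ((hasDerivAt_pow j y).div_const (Nat.factorial j : ℝ))
    convert h1 using 1
    rw [Finset.sum_range_succ']
    simp only [Nat.cast_zero, zero_mul, Nat.factorial_zero, Nat.cast_one, zero_div, add_zero]
    apply Finset.sum_congr rfl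
    intro j _
    have hj : j + 1 - 1 = j := rfl
    rw [hj, Nat.factorial_succ]
    have h2 : (j:ℝ) + 1 ≠ 0 := by positivity
    push_cast
    field_simp
  have hE : HasDerivAt (fun y : ℝ => Real.exp (-y)) (-Real.exp (-y)) y := by
    simpa using (hasDerivAt_neg' y).exp
  have := (hE.fun_mul hA).const_sub 1
  refine this.congr_deriv ?_
  rw [Finset.sum_range_succ]
  field_simp
  ring

theorem Gfun_hasDeriv {y : ℝ} (hy : 0 ≤ y) :
    HasDerivAt (Gfun Δ r) (Real.exp (-2*y) * y * (1+y) * Ffun Δ r y) y := by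
  have hne : (1 + y) ≠ 0 := by positivity
  have hF := Ffun_hasDeriv Δ r hy
  have hE : HasDerivAt (fun y : ℝ => Real.exp (-2*y)) (-2 * Real.exp (-2*y)) y := by
    have h := HasDerivAt.exp (f := fun y : ℝ => -2*y) (f' := -2) (x := y)
      (by simpa using (hasDerivAt_id y).const_mul (-2:ℝ))
    convert h using 1
    ring
  have hP : HasDerivAt (fun y : ℝ => (1+y)^2) (2*(1+y)) y := by
    have := ((hasDerivAt_id y).const_add 1).fun_pow 2
    simpa using this
  have h1 : HasDerivAt (fun y => -(1/2) * Real.exp (-2*y) * (1+y)^2 * Ffun Δ r y)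
      (-(1/2) * ((-2 * Real.exp (-2*y)) * (1+y)^2 * Ffun Δ r y
        + Real.exp (-2*y) * (2*(1+y)) * Ffun Δ r y
        + Real.exp (-2*y) * (1+y)^2 * hFun Δ r y)) y := by
    have := ((hE.fun_mul hP).fun_mul hF).const_mul (-(1/2) : ℝ)
    refine (this.congr_deriv ?_).congr_of_eventuallyEq (Filter.Eventually.of_forall fun z => ?_)
    · ring
    · ring
  have h2 : HasDerivAt (fun y => (1/2) * ∑ k ∈ Finset.Icc 2 (Δ-1), tailS Δ r (k+1) *
      (1 - Real.exp (-y) * ∑ j ∈ Finset.range (k+1), y^j / (Nat.factorial j : ℝ)))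
      ((1/2) * (Real.exp (-y) * gPoly Δ r y)) y := by
    have h3 : HasDerivAt (fun y : ℝ => ∑ k ∈ Finset.Icc 2 (Δ-1), tailS Δ r (k+1) *
        (1 - Real.exp (-y) * ∑ j ∈ Finset.range (k+1), y^j / (Nat.factorial j : ℝ)))
        (∑ k ∈ Finset.Icc 2 (Δ-1), tailS Δ r (k+1) *
          (Real.exp (-y) * y^k / (Nat.factorial k : ℝ))) y := by
      apply HasDerivAt.fun_sum
      intro k _
      exact (sumExp_hasDeriv k y).const_mul _
    have := h3.const_mul ((1:ℝ)/2)
    refine this.congr_deriv ?_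
    unfold gPoly
    simp only [Finset.mul_sum]
    apply Finset.sum_congr rfl
    intro k _
    ring
  have := h1.add h2
  refine this.congr_deriv ?_
  have hne2 : ((1:ℝ)+y)^2 ≠ 0 := by positivity
  have hkey : Real.exp (-2*y) * (1+y)^2 * hFun Δ r y = Real.exp (-y) * gPoly Δ r y := by
    have hhF : hFun Δ r y = Real.exp y / (1+y)^2 * gPoly Δ r y := rfl
    rw [hhF]
    field_simp
    have hee : Real.exp (-(2*y)) * Real.exp y = Real.exp (-y) := by
      rw [← Real.exp_add]; ring_nf
    linear_combination (gPoly Δ r y) * hee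
  rw [hkey]
  ring

def Cconst : ℝ := ∑ k ∈ Finset.Icc 2 (Δ-1), tailS Δ r (k+1)

theorem tailS_nonneg (hr : memR Δ r) (k : ℕ) (hk : 3 ≤ k) : 0 ≤ tailS Δ r k := by
  apply Finset.sum_nonneg
  intro d hd
  rw [Finset.mem_Icc] at hd
  exact hr.2.1 d (le_trans hk hd.1) hd.2

theorem Cconst_nonneg (hr : memR Δ r) : 0 ≤ Cconst Δ r := by
  apply Finset.sum_nonneg
  intro k hk
  rw [Finset.mem_Icc] at hk
  exact tailS_nonneg Δ r hr (k+1) (by omega)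

theorem gPoly_nonneg (hr : memR Δ r) {x : ℝ} (hx : 0 ≤ x) : 0 ≤ gPoly Δ r x := by
  apply Finset.sum_nonneg
  intro k hk
  rw [Finset.mem_Icc] at hk
  have h1 := tailS_nonneg Δ r hr (k+1) (by omega)
  positivity

theorem gPoly_le (hr : memR Δ r) {x : ℝ} (hx : 0 ≤ x) :
    gPoly Δ r x ≤ Cconst Δ r * (1+x)^Δ := by
  unfold gPoly Cconst
  rw [Finset.sum_mul]
  apply Finset.sum_le_sum
  intro k hk
  rw [Finset.mem_Icc] at hk
  have hs := tailS_nonneg Δ r hr (k+1) (by omega)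
  have h1 : x^k / (Nat.factorial k : ℝ) ≤ (1+x)^Δ := by
    have h2 : x^k ≤ (1+x)^k := pow_le_pow_left₀ hx (by linarith) k
    have h3 : (1+x)^k ≤ (1+x)^Δ := pow_le_pow_right₀ (by linarith) (by omega)
    have h4 : (1:ℝ) ≤ (Nat.factorial k : ℝ) := by
      exact_mod_cast Nat.one_le_iff_ne_zero.mpr (Nat.factorial_ne_zero k)
    calc x^k / (Nat.factorial k : ℝ) ≤ x^k / 1 := by
          apply div_le_div_of_nonneg_left (by positivity) one_pos h4
         _ = x^k := div_one _
         _ ≤ (1+x)^Δ := le_trans h2 h3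
  calc x ^ k / (Nat.factorial k:ℝ) * tailS Δ r (k + 1) ≤ (1+x)^Δ * tailS Δ r (k+1) :=
        mul_le_mul_of_nonneg_right h1 hs
    _ = tailS Δ r (k+1) * (1+x)^Δ := by ring

theorem hFun_nonneg (hr : memR Δ r) {x : ℝ} (hx : 0 ≤ x) : 0 ≤ hFun Δ r x := by
  have h1 := gPoly_nonneg Δ r hr hx
  have h2 : (0:ℝ) < (1+x)^2 := by positivity
  have : hFun Δ r x = Real.exp x / (1+x)^2 * gPoly Δ r x := rfl
  rw [this]
  positivity

theorem hFun_le (hr : memR Δ r) {x y : ℝ} (hx : 0 ≤ x) (hxy : x ≤ y) :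
    hFun Δ r x ≤ Real.exp y * (Cconst Δ r * (1+y)^Δ) := by
  have hy : 0 ≤ y := le_trans hx hxy
  have h1 : hFun Δ r x = Real.exp x / (1+x)^2 * gPoly Δ r x := rfl
  rw [h1]
  have h2 : Real.exp x / (1+x)^2 ≤ Real.exp y := by
    calc Real.exp x / (1+x)^2 ≤ Real.exp x / 1 := by
          apply div_le_div_of_nonneg_left (le_of_lt (Real.exp_pos x)) one_pos
          nlinarith
      _ = Real.exp x := div_one _
      _ ≤ Real.exp y := Real.exp_le_exp.mpr hxy
  have h3 : gPoly Δ r x ≤ Cconst Δ r * (1+x)^Δ := gPoly_le Δ r hr hx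
  have h4 : Cconst Δ r * (1+x)^Δ ≤ Cconst Δ r * (1+y)^Δ := by
    apply mul_le_mul_of_nonneg_left _ (Cconst_nonneg Δ r hr)
    exact pow_le_pow_left₀ (by linarith) (by linarith) Δ
  have h5 := gPoly_nonneg Δ r hr hx
  have h6 : (0:ℝ) ≤ Real.exp x / (1+x)^2 := by positivity
  exact mul_le_mul h2 (le_trans h3 h4) h5 (le_of_lt (Real.exp_pos y))

theorem Ffun_nonneg (hr : memR Δ r) {y : ℝ} (hy : 0 ≤ y) : 0 ≤ Ffun Δ r y := by
  apply intervalIntegral.integral_nonneg hy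
  intro x hx
  exact hFun_nonneg Δ r hr hx.1

theorem Ffun_le (hr : memR Δ r) {y : ℝ} (hy : 0 ≤ y) :
    Ffun Δ r y ≤ y * (Real.exp y * (Cconst Δ r * (1+y)^Δ)) := by
  have h1 : Ffun Δ r y ≤ ∫ x in (0:ℝ)..y, Real.exp y * (Cconst Δ r * (1+y)^Δ) := by
    apply intervalIntegral.integral_mono_on hy (hFun_intble Δ r hy)
      (intervalIntegrable_const)
    intro x hx
    exact hFun_le Δ r hr hx.1 hx.2
  rw [intervalIntegral.integral_const] at h1
  simpa [smul_eq_mul, sub_zero] using h1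

theorem Gfun_tendsto (hr : memR Δ r) :
    Tendsto (Gfun Δ r) atTop (𝓝 ((1/2) * Cconst Δ r)) := by
  have hterm1 : Tendsto (fun y => -(1/2) * Real.exp (-2*y) * (1+y)^2 * Ffun Δ r y)
      atTop (𝓝 0) := by
    have hb : Tendsto (fun y : ℝ => (3 * Cconst Δ r) * ((1+y)^(Δ+3) * Real.exp (-(1+y))))
        atTop (𝓝 ((3 * Cconst Δ r) * 0)) := by
      apply Tendsto.const_mul
      exact (tendsto_pow_mul_exp_neg_atTop_nhds_zero (Δ+3)).comp
        (tendsto_atTop_add_const_left atTop 1 tendsto_id)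
    rw [mul_zero] at hb
    have hb2 : Tendsto (fun y : ℝ => -((3 * Cconst Δ r) * ((1+y)^(Δ+3) * Real.exp (-(1+y)))))
        atTop (𝓝 0) := by simpa using hb.neg
    apply tendsto_of_tendsto_of_tendsto_of_le_of_le' hb2 hb
    · filter_upwards [eventually_ge_atTop (0:ℝ)] with y hy
      have hC := Cconst_nonneg Δ r hr
      have hF := Ffun_le Δ r hr hy
      have key : Real.exp (-2*y) * (1+y)^2 * Ffun Δ r y
          ≤ 3 * Cconst Δ r * ((1+y)^(Δ+3) * Real.exp (-(1+y))) := by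
        have step1 : Real.exp (-2*y) * (1+y)^2 * Ffun Δ r y
            ≤ Real.exp (-2*y) * (1+y)^2 * (y * (Real.exp y * (Cconst Δ r * (1+y)^Δ))) :=
          mul_le_mul_of_nonneg_left hF (by positivity)
        have e1 : Real.exp (-2*y) * Real.exp y = Real.exp 1 * Real.exp (-(1+y)) := by
          rw [← Real.exp_add, ← Real.exp_add]; ring_nf
        have he3 : Real.exp 1 ≤ 3 := Real.exp_one_lt_d9.le.trans (by norm_num)
        have h4 : Cconst Δ r * y * (1+y)^(Δ+2) ≤ Cconst Δ r * (1+y)^(Δ+3) := by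
          rw [mul_assoc]
          apply mul_le_mul_of_nonneg_left _ hC
          have hpow : (1+y)^(Δ+3) = (1+y) * (1+y)^(Δ+2) := by ring
          rw [hpow]
          exact mul_le_mul_of_nonneg_right (by linarith) (by positivity)
        have h5 : (Cconst Δ r * y * (1+y)^(Δ+2)) * Real.exp 1
            ≤ (Cconst Δ r * (1+y)^(Δ+3)) * 3 :=
          mul_le_mul h4 he3 (Real.exp_pos 1).le (by positivity)
        have h6 := mul_le_mul_of_nonneg_right h5 (Real.exp_pos (-(1+y))).le
        calc Real.exp (-2*y) * (1+y)^2 * Ffun Δ r y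
            ≤ Real.exp (-2*y) * (1+y)^2 * (y * (Real.exp y * (Cconst Δ r * (1+y)^Δ))) := step1
          _ = (Cconst Δ r * y * (1+y)^(Δ+2)) * (Real.exp (-2*y) * Real.exp y) := by ring
          _ = (Cconst Δ r * y * (1+y)^(Δ+2)) * Real.exp 1 * Real.exp (-(1+y)) := by
              rw [e1]; ring
          _ ≤ (Cconst Δ r * (1+y)^(Δ+3)) * 3 * Real.exp (-(1+y)) := h6
          _ = 3 * Cconst Δ r * ((1+y)^(Δ+3) * Real.exp (-(1+y))) := by ring
      have hF0 := Ffun_nonneg Δ r hr hy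
      have h2 : (0:ℝ) ≤ Real.exp (-2*y) * (1+y)^2 * Ffun Δ r y := by positivity
      linarith
    · filter_upwards [eventually_ge_atTop (0:ℝ)] with y hy
      have hF := Ffun_nonneg Δ r hr hy
      have hC := Cconst_nonneg Δ r hr
      have h2 : (0:ℝ) ≤ Real.exp (-2*y) * (1+y)^2 * Ffun Δ r y := by positivity
      have h3 : (0:ℝ) ≤ (3 * Cconst Δ r) * ((1+y)^(Δ+3) * Real.exp (-(1+y))) := by positivity
      nlinarith
  have hterm2 : Tendsto (fun y => (1/2) * ∑ k ∈ Finset.Icc 2 (Δ-1), tailS Δ r (k+1) *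
      (1 - Real.exp (-y) * ∑ j ∈ Finset.range (k+1), y^j / (Nat.factorial j : ℝ)))
      atTop (𝓝 ((1/2) * Cconst Δ r)) := by
    unfold Cconst
    apply Tendsto.const_mul
    have : Tendsto (fun y : ℝ => ∑ k ∈ Finset.Icc 2 (Δ-1), tailS Δ r (k+1) *
        (1 - Real.exp (-y) * ∑ j ∈ Finset.range (k+1), y^j / (Nat.factorial j : ℝ)))
        atTop (𝓝 (∑ k ∈ Finset.Icc 2 (Δ-1), tailS Δ r (k+1) * (1 - 0))) := by
      apply tendsto_finset_sum
      intro k _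
      apply Tendsto.const_mul
      apply Tendsto.const_sub
      have h1 : Tendsto (fun y : ℝ => ∑ j ∈ Finset.range (k+1),
          y^j * Real.exp (-y) / (Nat.factorial j : ℝ)) atTop
          (𝓝 (∑ j ∈ Finset.range (k+1), (0:ℝ))) := by
        apply tendsto_finset_sum
        intro j _
        have := (tendsto_pow_mul_exp_neg_atTop_nhds_zero j).div_const
          ((Nat.factorial j : ℝ))
        simpa using this
      rw [Finset.sum_const, smul_zero] at h1
      apply h1.congr
      intro y
      rw [Finset.mul_sum]
      apply Finset.sum_congr rfl
      intro j _
      ring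
    simpa using this
  have := hterm1.add hterm2
  rw [zero_add] at this
  exact this
end

theorem sum_tailS_eq (Δ : ℕ) (hΔ : 3 ≤ Δ) (r : ℕ → ℝ) :
    ∑ k ∈ Finset.Icc 2 (Δ-1), tailS Δ r (k+1) = ∑ k ∈ Finset.Icc 3 Δ, ((k:ℝ) - 2) * r k := by
  have h1 : ∑ k ∈ Finset.Icc 2 (Δ-1), tailS Δ r (k+1)
      = ∑ k ∈ Finset.Icc 3 Δ, tailS Δ r k := by
    rw [show (3:ℕ) = 2 + 1 by rfl, show Δ = (Δ - 1) + 1 by omega, ← Finset.map_add_right_Icc,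
      Finset.sum_map]
    rfl
  rw [h1]
  unfold tailS
  have h2 : ∀ k ∈ Finset.Icc 3 Δ, ∑ d ∈ Finset.Icc k Δ, r d
      = ∑ d ∈ Finset.Icc 3 Δ, if k ≤ d then r d else 0 := by
    intro k hk
    rw [Finset.mem_Icc] at hk
    rw [Finset.sum_ite, Finset.sum_const_zero, add_zero]
    apply Finset.sum_congr _ (fun _ _ => rfl)
    ext d
    simp only [Finset.mem_filter, Finset.mem_Icc]
    omega
  rw [Finset.sum_congr rfl h2, Finset.sum_comm]
  apply Finset.sum_congr rfl
  intro d hd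
  rw [Finset.mem_Icc] at hd
  have h3 : ∀ k ∈ Finset.Icc 3 Δ, (if k ≤ d then r d else 0)
      = if k ∈ Finset.Icc 3 d then r d else 0 := by
    intro k hk
    rw [Finset.mem_Icc] at hk
    simp only [Finset.mem_Icc]
    congr 1
    simp only [eq_iff_iff]
    omega
  rw [Finset.sum_congr rfl h3, Finset.sum_ite_mem, Finset.inter_comm,
    Finset.inter_eq_left.mpr (Finset.Icc_subset_Icc_right hd.2), Finset.sum_const,
    Nat.card_Icc]
  have : d + 1 - 3 = d - 2 := by omega
  rw [this, nsmul_eq_mul]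
  congr 1
  have : (2:ℝ) ≤ (d:ℝ) := by exact_mod_cast le_trans (by norm_num) hd.1
  push_cast [Nat.cast_sub (by omega : 2 ≤ d)]
  ring

end ImproperAux

open ImproperAux

/-- Explicit improper integral identity:
`∫_0^∞ e^{-λ(s)} λ(s) λ'(s) Λ_r(s) ds = (1/2) Σ_{k=3}^Δ (k-2) r_k`. -/
theorem improper_integral_identity (Δ : ℕ) (hΔ : 3 ≤ Δ) (lam : ℝ → ℝ)
    (hdiff : Differentiable ℝ lam) (h0 : lam 0 = 0)
    (hode : ∀ t : ℝ, 0 ≤ t → deriv lam t = Real.exp (-lam t) * (1 + lam t))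
    (r : ℕ → ℝ) (hr : memR Δ r) :
    MeasureTheory.IntegrableOn
      (fun s => Real.exp (-lam s) * lam s * deriv lam s * LamErr lam Δ r s) (Set.Ici 0) ∧
    (∫ s in Set.Ici (0:ℝ), Real.exp (-lam s) * lam s * deriv lam s * LamErr lam Δ r s) =
      (1 / 2) * ∑ k ∈ Finset.Icc 3 Δ, ((k : ℝ) - 2) * r k := by
  classical
  set f : ℝ → ℝ := fun s => Real.exp (-lam s) * lam s * deriv lam s * LamErr lam Δ r s with hf
  have hnn := lam_nonneg lam hdiff h0 hode
  have hLam : ∀ t, LamErr lam Δ r t = deriv lam t * Ffun Δ r (lam t) := fun t => rfl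
  set L : ℝ := (1/2) * Cconst Δ r with hL
  -- continuity of f on Ici 0
  have hFF : ContinuousOn (fun t => Ffun Δ r (lam t)) (Set.Ici 0) := by
    intro t ht
    exact (((Ffun_hasDeriv Δ r (hnn t ht)).continuousAt).comp
      (hdiff t).continuousAt).continuousWithinAt
  have hcont : ContinuousOn f (Set.Ici 0) := by
    have hlc : Continuous lam := hdiff.continuous
    have h1 : ContinuousOn (fun t => Real.exp (-lam t) * lam t *
        (Real.exp (-lam t) * (1 + lam t)) *
        ((Real.exp (-lam t) * (1 + lam t)) * Ffun Δ r (lam t))) (Set.Ici 0) := by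
      apply ContinuousOn.mul
      · fun_prop
      · exact (by fun_prop : ContinuousOn (fun t => Real.exp (-lam t) * (1 + lam t)) (Set.Ici 0)).mul hFF
    apply h1.congr
    intro t ht
    simp only [hf, hLam t, hode t ht]
  -- FTC on [0, T]
  have hFTC : ∀ T : ℝ, 0 ≤ T → (∫ s in (0:ℝ)..T, f s) = Gfun Δ r (lam T) := by
    intro T hT
    have key : (∫ s in (0:ℝ)..T, f s) = Gfun Δ r (lam T) - Gfun Δ r (lam 0) := by
      apply intervalIntegral.integral_eq_sub_of_hasDerivAt
      · intro t ht
        rw [Set.uIcc_of_le hT] at ht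
        have hy : 0 ≤ lam t := hnn t ht.1
        have hG : HasDerivAt (fun t => Gfun Δ r (lam t))
            (Real.exp (-2 * lam t) * lam t * (1 + lam t) * Ffun Δ r (lam t) * deriv lam t) t :=
          (Gfun_hasDeriv Δ r hy).comp t (hdiff t).hasDerivAt
        refine hG.congr_deriv ?_
        simp only [hf, hLam t, hode t ht.1]
        have hee : Real.exp (-2 * lam t) = Real.exp (-lam t) * Real.exp (-lam t) := by
          rw [← Real.exp_add]; ring_nf
        rw [hee]; ring
      · apply (hcont.mono _).intervalIntegrable
        rw [Set.uIcc_of_le hT]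
        exact Set.Icc_subset_Ici_self
    have hG0 : Gfun Δ r (lam 0) = 0 := by
      rw [h0]
      unfold Gfun Ffun
      rw [intervalIntegral.integral_same]
      have hone : ∀ k : ℕ, ∑ j ∈ Finset.range (k+1), (0:ℝ)^j / (Nat.factorial j : ℝ) = 1 := by
        intro k
        rw [Finset.sum_range_succ']
        simp
      have : ∀ k ∈ Finset.Icc 2 (Δ-1), tailS Δ r (k+1) *
          (1 - Real.exp (-(0:ℝ)) * ∑ j ∈ Finset.range (k+1), (0:ℝ)^j / (Nat.factorial j : ℝ))
          = 0 := by
        intro k _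
        rw [hone k]
        simp
      rw [Finset.sum_congr rfl this]
      simp
    rw [key, hG0, sub_zero]
  -- tendsto of the interval integrals
  have hGl : Tendsto (fun T => Gfun Δ r (lam T)) atTop (nhds L) :=
    (Gfun_tendsto Δ r hr).comp (lam_tendsto lam hdiff h0 hode)
  have hInt : Tendsto (fun T => ∫ s in (0:ℝ)..T, f s) atTop (nhds L) := by
    apply hGl.congr'
    filter_upwards [eventually_ge_atTop (0:ℝ)] with T hT
    exact (hFTC T hT).symm
  -- nonnegativity of f on [0,∞)
  have hfpos : ∀ t : ℝ, 0 ≤ t → 0 ≤ f t := by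
    intro t ht
    have hy := hnn t ht
    have hFn := Ffun_nonneg Δ r hr hy
    simp only [hf, hLam t, hode t ht]
    positivity
  have hnormEq : ∀ᶠ T in (atTop : Filter ℝ),
      (∫ s in (0:ℝ)..T, ‖f s‖) = ∫ s in (0:ℝ)..T, f s := by
    filter_upwards [eventually_ge_atTop (0:ℝ)] with T hT
    apply intervalIntegral.integral_congr
    intro t ht
    rw [Set.uIcc_of_le hT] at ht
    exact Real.norm_of_nonneg (hfpos t ht.1)
  have hnorm : Tendsto (fun T => ∫ s in (0:ℝ)..T, ‖f s‖) atTop (nhds L) :=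
    hInt.congr' (by filter_upwards [hnormEq] with T h using h.symm)
  have hfi : ∀ T : ℝ, IntegrableOn f (Set.Ioc 0 T) := by
    intro T
    have h1 : IntegrableOn f (Set.Icc 0 (max T 0)) :=
      (hcont.mono (fun x hx => hx.1)).integrableOn_Icc
    apply h1.mono_set
    intro x hx
    exact ⟨hx.1.le, le_trans hx.2 (le_max_left _ _)⟩
  have hIntOn : IntegrableOn f (Set.Ioi 0) :=
    integrableOn_Ioi_of_intervalIntegral_norm_tendsto L 0 (fun T => hfi T) tendsto_id hnorm
  have hIntOnIci : IntegrableOn f (Set.Ici 0) := by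
    rwa [integrableOn_Ici_iff_integrableOn_Ioi]
  constructor
  · exact hIntOnIci
  · have hval : Tendsto (fun T => ∫ s in (0:ℝ)..T, f s) atTop
        (nhds (∫ s in Set.Ioi (0:ℝ), f s)) :=
      intervalIntegral_tendsto_integral_Ioi 0 hIntOn tendsto_id
    have h2 : (∫ s in Set.Ioi (0:ℝ), f s) = L := tendsto_nhds_unique hval hInt
    rw [show (∫ s in Set.Ici (0:ℝ),
        Real.exp (-lam s) * lam s * deriv lam s * LamErr lam Δ r s) = ∫ s in Set.Ici (0:ℝ), f s
      from rfl, MeasureTheory.integral_Ici_eq_integral_Ioi, h2, hL]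
    unfold Cconst
    rw [sum_tailS_eq Δ hΔ r]
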